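/- Let X be a nonempty metrizable topological space containing a dense completely metrizable subspace. Then Odd has a stationary winning strategy in the classical Banach–Mazur game BM(X): there is a function s assigning to every nonempty open set U ⊆ X a nonempty open set s(U) ⊆ U such that Odd wins every play U₀ ⊇ U₁ ⊇ U₂ ⊇ ⋯ in which U₂ₖ₊₁ = s(U₂ₖ) for all k. -/

import Mathlib

open scoped ENNReal
open Topology Filter


/-! The classical Banach–Mazur game on a topological space. -/

section BMtop

variable {X : Type*} [TopologicalSpace X]

/-- A play of the Banach–Mazur game: a decreasing sequence of nonempty open sets. -/
def TopPlay (U : ℕ → Set X) : Prop :=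
  (∀ n, IsOpen (U n)) ∧ (∀ n, (U n).Nonempty) ∧ ∀ n, U (n + 1) ⊆ U n

/-- A finite decreasing sequence of nonempty open sets (a partial play). -/
def TopPartialPlay {m : ℕ} (v : Fin m → Set X) : Prop :=
  (∀ i, IsOpen (v i)) ∧ (∀ i, (v i).Nonempty) ∧ ∀ i j : Fin m, i ≤ j → v j ⊆ v i

/-- A strategy for Odd: a value for every finite sequence of odd length. -/
def TopOddStrategy (X : Type*) := (k : ℕ) → (Fin (2 * k + 1) → Set X) → Set X

/-- A strategy for Odd is valid if it assigns, to every finite decreasing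
sequence of nonempty open sets of odd length, a nonempty open subset of its
last term. -/
def TopOddValid (s : TopOddStrategy X) : Prop :=
  ∀ (k : ℕ) (v : Fin (2 * k + 1) → Set X), TopPartialPlay v →
    IsOpen (s k v) ∧ (s k v).Nonempty ∧ s k v ⊆ v (Fin.last (2 * k))

/-- A play follows Odd's strategy `s` if every odd-indexed term is the value of
`s` on the preceding terms. -/
def TopOddFollows (U : ℕ → Set X) (s : TopOddStrategy X) : Prop :=
  ∀ k : ℕ, U (2 * k + 1) = s k (fun i => U i.val)

/-- Odd has a winning strategy in the classical Banach–Mazur game `BM(X)`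
(he wins iff the intersection of the play is nonempty). -/
def TopOddWins (X : Type*) [TopologicalSpace X] : Prop :=
  ∃ s : TopOddStrategy X, TopOddValid s ∧
    ∀ U : ℕ → Set X, TopPlay U → TopOddFollows U s → (⋂ n, U n).Nonempty

/-- A strategy for Eve: a value for the empty sequence and for every finite
sequence of even positive length. -/
def TopEveStrategy (X : Type*) := (k : ℕ) → (Fin (2 * k) → Set X) → Set X

/-- A strategy for Eve is valid if it assigns, to every finite decreasing
sequence of nonempty open sets of even length, a nonempty open set contained in
all of its terms (for the empty sequence: just a nonempty open set). -/
def TopEveValid (e : TopEveStrategy X) : Prop :=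
  ∀ (k : ℕ) (v : Fin (2 * k) → Set X), TopPartialPlay v →
    IsOpen (e k v) ∧ (e k v).Nonempty ∧ ∀ i : Fin (2 * k), e k v ⊆ v i

/-- A play follows Eve's strategy `e` if every even-indexed term is the value of
`e` on the preceding terms. -/
def TopEveFollows (U : ℕ → Set X) (e : TopEveStrategy X) : Prop :=
  ∀ k : ℕ, U (2 * k) = e k (fun i => U i.val)

/-- Eve has a winning strategy in the classical Banach–Mazur game `BM(X)`
(she wins iff the intersection of the play is empty). -/
def TopEveWins (X : Type*) [TopologicalSpace X] : Prop :=
  ∃ e : TopEveStrategy X, TopEveValid e ∧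
    ∀ U : ℕ → Set X, TopPlay U → TopEveFollows U e → ¬ (⋂ n, U n).Nonempty

/-- Odd has a winning strategy in the game `BM(X, ⋆)` (he wins iff the
intersection of the play is a one-point set). -/
def TopOddWinsStar (X : Type*) [TopologicalSpace X] : Prop :=
  ∃ s : TopOddStrategy X, TopOddValid s ∧
    ∀ U : ℕ → Set X, TopPlay U → TopOddFollows U s → ∃ x : X, (⋂ n, U n) = {x}

/-- Eve has a winning strategy in the game `BM(X, ⋆)` (she wins iff the
intersection of the play is not a one-point set). -/
def TopEveWinsStar (X : Type*) [TopologicalSpace X] : Prop :=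
  ∃ e : TopEveStrategy X, TopEveValid e ∧
    ∀ U : ℕ → Set X, TopPlay U → TopEveFollows U e → ¬ ∃ x : X, (⋂ n, U n) = {x}

/-- A topological space is completely metrizable if its topology is induced by a
complete metric. -/
def IsCompletelyMetrizable (Y : Type*) [t : TopologicalSpace Y] : Prop :=
  ∃ m : MetricSpace Y, m.toUniformSpace.toTopologicalSpace = t ∧
    @CompleteSpace Y m.toUniformSpace

end BMtop

/-- If a nonempty metrizable space `X` contains a dense
completely metrizable subspace, then Odd has a stationary winning strategy in
the classical Banach–Mazur game `BM(X)`. -/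
theorem odd_stationary_wins_of_dense_completely_metrizable {X : Type*}
    [TopologicalSpace X] [Nonempty X] [TopologicalSpace.MetrizableSpace X]
    (G : Set X) (hG : Dense G) (hGm : IsCompletelyMetrizable ↥G) :
    ∃ s : Set X → Set X,
      (∀ U : Set X, IsOpen U → U.Nonempty →
        IsOpen (s U) ∧ (s U).Nonempty ∧ s U ⊆ U) ∧
      ∀ U : ℕ → Set X, TopPlay U → (∀ k : ℕ, U (2 * k + 1) = s (U (2 * k))) →
        (⋂ n, U n).Nonempty := by
  classical
  obtain ⟨m, hm, hc⟩ := hGm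
  have reg : ∀ (U : Set X), IsOpen U → ∀ x ∈ U,
      ∃ W, IsOpen W ∧ x ∈ W ∧ closure W ⊆ U := by
    letI : MetricSpace X := TopologicalSpace.metrizableSpaceMetric X
    intro U hU x hx
    obtain ⟨t, ht, htc, hts⟩ := exists_mem_nhds_isClosed_subset (hU.mem_nhds hx)
    exact ⟨interior t, isOpen_interior, mem_interior_iff_mem_nhds.2 ht,
      (closure_minimal interior_subset htc).trans hts⟩
  letI : MetricSpace ↥G := m.replaceTopology hm.symm
  haveI : CompleteSpace ↥G := by
    have h : (m.replaceTopology hm.symm) = m := MetricSpace.replaceTopology_eq m hm.symm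
    show @CompleteSpace ↥G (m.replaceTopology hm.symm).toUniformSpace
    rw [h]
    exact hc
  set dm : Set X → ℝ≥0∞ :=
    fun U => min 1 (EMetric.diam (Subtype.val ⁻¹' U : Set G)) with hdm_def
  have key : ∀ U : Set X, IsOpen U → U.Nonempty → ∃ W : Set X, IsOpen W ∧ W.Nonempty ∧
      closure W ⊆ U ∧ EMetric.diam (Subtype.val ⁻¹' W : Set G) ≤ dm U / 2 := by
    intro U hU hUne
    obtain ⟨x, hxU, hxG⟩ := hG.inter_open_nonempty U hU hUne
    by_cases hδ : dm U = 0
    · obtain ⟨W, hWo, hxW, hWcl⟩ := reg U hU x hxU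
      have hd : EMetric.diam (Subtype.val ⁻¹' U : Set G) = 0 := by
        rcases le_total 1 (EMetric.diam (Subtype.val ⁻¹' U : Set G)) with h | h
        · rw [hdm_def] at hδ; simp only [min_eq_left h] at hδ; norm_num at hδ
        · rw [hdm_def] at hδ; simpa only [min_eq_right h] using hδ
      refine ⟨W, hWo, ⟨x, hxW⟩, hWcl, ?_⟩
      calc EMetric.diam (Subtype.val ⁻¹' W : Set G)
          ≤ EMetric.diam (Subtype.val ⁻¹' U : Set G) :=
            EMetric.diam_mono (Set.preimage_mono (subset_closure.trans hWcl))
        _ = dm U / 2 := by rw [hd, hδ, ENNReal.zero_div]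
    · set ε : ℝ≥0∞ := dm U / 8 with hε
      have hεpos : 0 < ε := ENNReal.div_pos hδ (by norm_num)
      set xg : ↥G := ⟨x, hxG⟩
      have hball : EMetric.ball xg ε ∈ 𝓝 xg := EMetric.ball_mem_nhds _ hεpos
      rw [mem_nhds_subtype] at hball
      obtain ⟨t, ht, hts⟩ := hball
      obtain ⟨W, hWo, hxW, hWcl⟩ := reg (U ∩ interior t) (hU.inter isOpen_interior) x
        ⟨hxU, mem_interior_iff_mem_nhds.2 ht⟩
      refine ⟨W, hWo, ⟨x, hxW⟩, hWcl.trans Set.inter_subset_left, ?_⟩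
      have hsub : (Subtype.val ⁻¹' W : Set G) ⊆ EMetric.ball xg ε := by
        intro y hy
        have hyt : (y : X) ∈ t := interior_subset (subset_closure.trans hWcl hy).2
        exact hts hyt
      calc EMetric.diam (Subtype.val ⁻¹' W : Set G)
          ≤ EMetric.diam (EMetric.ball xg ε) := EMetric.diam_mono hsub
        _ ≤ 2 * ε := EMetric.diam_ball
        _ ≤ dm U / 2 := by
            rw [hε, div_eq_mul_inv, div_eq_mul_inv, ← mul_assoc,
              mul_comm (2 : ℝ≥0∞) (dm U), mul_assoc,
              show (2:ℝ≥0∞) * 8⁻¹ = 4⁻¹ by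
                rw [show (8:ℝ≥0∞) = 2*4 by norm_num,
                  ENNReal.mul_inv (by norm_num) (by norm_num), ← mul_assoc,
                  ENNReal.mul_inv_cancel (by norm_num) (by norm_num), one_mul]]
            exact mul_le_mul_right (by
              exact ENNReal.inv_le_inv.2 (by norm_num)) _
  choose W hWo hWne hWcl hWd using key
  refine ⟨fun U => if h : IsOpen U ∧ U.Nonempty then W U h.1 h.2 else U, ?_, ?_⟩
  · intro U hUo hUne
    simp only [dif_pos (And.intro hUo hUne)]
    exact ⟨hWo U hUo hUne, hWne U hUo hUne,
      subset_closure.trans (hWcl U hUo hUne)⟩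
  · intro U hU hfol
    obtain ⟨hop, hne, hsub⟩ := hU
    have hanti : Antitone U := antitone_nat_of_succ_le fun n => hsub n
    have hodd : ∀ k, closure (U (2*k+1)) ⊆ U (2*k) ∧
        EMetric.diam (Subtype.val ⁻¹' U (2*k+1) : Set G) ≤ dm (U (2*k)) / 2 := by
      intro k
      have h : U (2*k+1) = W (U (2*k)) (hop _) (hne _) := by
        rw [hfol k]
        simp only [dif_pos (And.intro (hop (2*k)) (hne (2*k)))]
      rw [h]
      exact ⟨hWcl _ _ _, hWd _ _ _⟩
    have hdmb : ∀ k, dm (U (2*k)) ≤ 2⁻¹ ^ k := by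
      intro k
      induction k with
      | zero => simp only [pow_zero]; exact min_le_left _ _
      | succ k ih =>
        calc dm (U (2*(k+1)))
            ≤ EMetric.diam (Subtype.val ⁻¹' U (2*k+1) : Set G) :=
              (min_le_right _ _).trans
                (EMetric.diam_mono (Set.preimage_mono (hanti (by omega))))
          _ ≤ dm (U (2*k)) / 2 := (hodd k).2
          _ ≤ 2⁻¹ ^ k / 2 := ENNReal.div_le_div_right ih 2
          _ = 2⁻¹ ^ (k+1) := by rw [pow_succ, div_eq_mul_inv]
    have hDne : ∀ n, (Subtype.val ⁻¹' U n : Set G).Nonempty := by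
      intro n
      obtain ⟨x, hxU, hxG⟩ := hG.inter_open_nonempty _ (hop n) (hne n)
      exact ⟨⟨x, hxG⟩, hxU⟩
    choose x hx using fun k => hDne (2*k+1)
    have hedist : ∀ k j, k ≤ j → edist (x j) (x k) ≤ 2⁻¹ ^ k := by
      intro k j hkj
      have h1 : x j ∈ (Subtype.val ⁻¹' U (2*k+1) : Set G) :=
        Set.preimage_mono (hanti (by omega)) (hx j)
      refine (EMetric.edist_le_diam_of_mem h1 (hx k)).trans ?_
      exact (hodd k).2.trans (((ENNReal.div_le_div_right (hdmb k) 2)).trans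
        (ENNReal.half_le_self))
    have hcauchy : CauchySeq x := by
      rw [EMetric.cauchySeq_iff]
      intro ε hε
      obtain ⟨N, hN⟩ := ENNReal.exists_inv_two_pow_lt (ne_of_gt hε)
      refine ⟨N, fun a ha b hb => ?_⟩
      rcases le_total a b with h | h
      · rw [edist_comm]
        exact lt_of_le_of_lt ((hedist a b h).trans
          (pow_le_pow_of_le_one zero_le (by norm_num) ha)) hN
      · exact lt_of_le_of_lt ((hedist b a h).trans
          (pow_le_pow_of_le_one zero_le (by norm_num) hb)) hN
    obtain ⟨g, hg⟩ := cauchySeq_tendsto_of_complete hcauchy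
    have htend : Filter.Tendsto (fun k => ((x k : X))) Filter.atTop (𝓝 (↑g)) :=
      (continuous_subtype_val.tendsto g).comp hg
    have hgU : ∀ n, (↑g : X) ∈ closure (U (2*n+1)) := by
      intro n
      refine mem_closure_of_tendsto htend ?_
      filter_upwards [Filter.eventually_ge_atTop n] with k hk
      exact hanti (by omega) (hx k)
    exact ⟨↑g, Set.mem_iInter.2 fun n => hanti (by omega) ((hodd n).1 (hgU n))⟩
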